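/- arXiv:1007.2952 — 6 statements merged into one kernel-verified Lean document; each statement's English description precedes it below -/
import Mathlib

section
/- There exists a classical deterministic winning strategy for the matching game for m = 4; that is, there exist functions s_A : {0,1}^4 → {0,1}^2 and s_B assigning to each perfect matching y on {0,1,2,3} a pair (b₁, b₂) with y b₁ = b₂ and a string t ∈ {0,1}^2, such that for every x ∈ {0,1}^4 and every perfect matching y, with (b₁, b₂, t) = s_B(y), one has x_{b₁} ⊕ x_{b₂} = ⨁_{k=0}^{1} ((bin(b₁)_k ⊕ bin(b₂)_k) ∧ (s_A(x)_k ⊕ t_k)). -/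
/-- The `k`-th bit (big-endian, most significant first) of the `L`-bit binary
representation of `b`, viewed as an element of `ZMod 2`. -/
def binRep (L b : ℕ) (k : Fin L) : ZMod 2 :=
  if Nat.testBit b (L - 1 - k.val) then 1 else 0

/-- A perfect matching on `{0, …, m-1}`, encoded as a fixed-point-free
involution `y : Fin m → Fin m`. -/
def Matching (m : ℕ) : Type :=
  {y : Fin m → Fin m // y ∘ y = id ∧ ∀ i, y i ≠ i}

/-- There is a classical deterministic winning strategy for the matching game
for `m = 4` (with `L = ⌈log₂ 4⌉ = 2`).  In `ZMod 2`, `+` is XOR and `*` is AND. -/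
theorem matching_game_classical_winning_strategy_m4 :
    ∃ (sA : (Fin 4 → ZMod 2) → (Fin 2 → ZMod 2))
      (sB : Matching 4 → Fin 4 × Fin 4 × (Fin 2 → ZMod 2)),
      ∀ y : Matching 4,
        y.val (sB y).1 = (sB y).2.1 ∧
        ∀ x : Fin 4 → ZMod 2,
          x (sB y).1 + x (sB y).2.1 =
            ∑ k : Fin 2,
              (binRep 2 ((sB y).1).val k + binRep 2 ((sB y).2.1).val k) *
                (sA x k + (sB y).2.2 k) := by
  refine ⟨fun x k => if k = 0 then x 0 + x 2 else x 0 + x 1,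
    fun y => if y.val 0 = 3 then (1, 2, fun _ => 0) else (0, y.val 0, fun _ => 0),
    fun y => ?_⟩
  obtain ⟨f, hinv, hfp⟩ := y
  have hinv' : ∀ i, f (f i) = i := fun i => congrFun hinv i
  simp only
  by_cases h3 : f 0 = 3
  · have h1 : f 1 = 2 := by
      have h10 : (f 1).val ≠ 0 := fun h => by
        have := hinv' 1
        rw [show f 1 = 0 from Fin.ext h, h3] at this
        exact absurd this (by decide)
      have h13 : (f 1).val ≠ 3 := fun h => by
        have := hinv' 0
        rw [h3, ← show f 1 = 3 from Fin.ext h, hinv'] at this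
        exact absurd this (by decide)
      have h11 : (f 1).val ≠ 1 := fun h => hfp 1 (Fin.ext h)
      have := (f 1).isLt
      exact Fin.ext (by omega)
    rw [if_pos h3]
    refine ⟨h1, fun x => ?_⟩
    have h2 : (2 : ZMod 2) = 0 := rfl
    simp only [Fin.sum_univ_two, binRep]
    norm_num [Nat.testBit_succ]
    linear_combination -x 0 * h2
  · rw [if_neg h3]
    refine ⟨rfl, fun x => ?_⟩
    have h00 : f 0 ≠ 0 := hfp 0
    have hv := (f 0).isLt
    have hv0 : (f 0).val ≠ 0 := fun h => h00 (Fin.ext h)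
    have hv3 : (f 0).val ≠ 3 := fun h => h3 (Fin.ext h)
    have hcase : (f 0).val = 1 ∨ (f 0).val = 2 := by omega
    have h2 : (2 : ZMod 2) = 0 := rfl
    rcases hcase with h | h
    · rw [show f 0 = 1 from Fin.ext h]
      simp only [Fin.sum_univ_two, binRep]
      norm_num [Nat.testBit_succ]
    · rw [show f 0 = 2 from Fin.ext h]
      simp only [Fin.sum_univ_two, binRep]
      norm_num [Nat.testBit_succ]
end

section
/- There exists a classical deterministic winning strategy for the matching game for m = 6; that is, there exist functions s_A : {0,1}^6 → {0,1}^3 and s_B assigning to each perfect matching y on {0,1,2,3,4,5} a pair (b₁, b₂) with y b₁ = b₂ and a string t ∈ {0,1}^3, such that for every x ∈ {0,1}^6 and every perfect matching y, with (b₁, b₂, t) = s_B(y), one has x_{b₁} ⊕ x_{b₂} = ⨁_{k=0}^{2} ((bin(b₁)_k ⊕ bin(b₂)_k) ∧ (s_A(x)_k ⊕ t_k)). -/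
/-- Alice's strategy: inner products of `x` with the indicator vectors of
`{0,4}`, `{0,2}`, `{0,1}`. -/
def mySA (x : Fin 6 → ZMod 2) : Fin 3 → ZMod 2 :=
  ![x 0 + x 4, x 0 + x 2, x 0 + x 1]

/-- Bob's strategy: find an edge of the matching inside `{0,1,2,4}`. -/
def mySB (y : Matching 6) : Fin 6 × Fin 6 × (Fin 3 → ZMod 2) :=
  if y.val 0 = 1 ∨ y.val 0 = 2 ∨ y.val 0 = 4 then (0, y.val 0, fun _ => 0)
  else if y.val 1 = 2 ∨ y.val 1 = 4 then (1, y.val 1, fun _ => 0)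
  else (2, y.val 2, fun _ => 0)

lemma all6 (a : Fin 6) : a = 0 ∨ a = 1 ∨ a = 2 ∨ a = 3 ∨ a = 4 ∨ a = 5 := by
  fin_cases a <;> simp

set_option maxRecDepth 10000 in
lemma key1 : ∀ x : Fin 6 → ZMod 2, ∀ b1 b2 : Fin 6,
    ((b1 = 0 ∧ (b2 = 1 ∨ b2 = 2 ∨ b2 = 4)) ∨ (b1 = 1 ∧ (b2 = 2 ∨ b2 = 4)) ∨
      (b1 = 2 ∧ b2 = 4)) →
    x b1 + x b2 = ∑ k : Fin 3, (binRep 3 b1.val k + binRep 3 b2.val k) * (mySA x k + 0) := by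
  decide

lemma key2 (f : Fin 6 → Fin 6) (hinv : ∀ i, f (f i) = i) (hfp : ∀ i, f i ≠ i)
    (h0 : ¬(f 0 = 1 ∨ f 0 = 2 ∨ f 0 = 4)) (h1 : ¬(f 1 = 2 ∨ f 1 = 4)) : f 2 = 4 := by
  push_neg at h0 h1
  obtain ⟨h01, h02, h04⟩ := h0
  obtain ⟨h12, h14⟩ := h1
  have e0 := hinv 0
  have e1 := hinv 1
  have e2 := hinv 2
  have p0 := hfp 0
  have p1 := hfp 1
  have p2 := hfp 2
  rcases all6 (f 0) with h|h|h|h|h|h <;>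
    rcases all6 (f 1) with g|g|g|g|g|g <;>
      rcases all6 (f 2) with k|k|k|k|k|k <;>
        simp_all

/-- There is a classical deterministic winning strategy for the matching game
for `m = 6` (with `L = ⌈log₂ 6⌉ = 3`).  In `ZMod 2`, `+` is XOR and `*` is AND. -/
theorem matching_game_classical_winning_strategy_m6 :
    ∃ (sA : (Fin 6 → ZMod 2) → (Fin 3 → ZMod 2))
      (sB : Matching 6 → Fin 6 × Fin 6 × (Fin 3 → ZMod 2)),
      ∀ y : Matching 6,
        y.val (sB y).1 = (sB y).2.1 ∧
        ∀ x : Fin 6 → ZMod 2,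
          x (sB y).1 + x (sB y).2.1 =
            ∑ k : Fin 3,
              (binRep 3 ((sB y).1).val k + binRep 3 ((sB y).2.1).val k) *
                (sA x k + (sB y).2.2 k) := by
  refine ⟨mySA, mySB, ?_⟩
  rintro ⟨f, hinv, hfp⟩
  have hinv' : ∀ i, f (f i) = i := fun i => congrFun hinv i
  unfold mySB
  dsimp only
  split_ifs with h0 h1
  · exact ⟨rfl, fun x => key1 x 0 (f 0) (Or.inl ⟨rfl, h0⟩)⟩
  · exact ⟨rfl, fun x => key1 x 1 (f 1) (Or.inr (Or.inl ⟨rfl, h1⟩))⟩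
  · have h2 : f 2 = 4 := key2 f hinv' hfp h0 h1
    refine ⟨rfl, fun x => ?_⟩
    rw [h2]
    exact key1 x 2 4 (Or.inr (Or.inr ⟨rfl, rfl⟩))
end

section
/- Let m ≥ 8 be an even integer and L = ⌈log₂ m⌉. There is no classical deterministic winning strategy for the matching game for m; that is, there do not exist functions s_A : {0,1}^m → {0,1}^L and s_B assigning to each perfect matching y on {0,…,m−1} a pair (b₁, b₂) with y b₁ = b₂ and a string t ∈ {0,1}^L, such that for every x ∈ {0,1}^m and every perfect matching y, with (b₁, b₂, t) = s_B(y), one has x_{b₁} ⊕ x_{b₂} = ⨁_{k=0}^{L−1} ((bin(b₁)_k ⊕ bin(b₂)_k) ∧ (s_A(x)_k ⊕ t_k)). -/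
lemma sum_split (L : ℕ) (B1 B2 V : Fin L → ZMod 2) :
    ∑ k, (B1 k + B2 k) * V k = (∑ k, B1 k * V k) + (∑ k, B2 k * V k) := by
  simp [add_mul, Finset.sum_add_distrib]

lemma clog_bound (m : ℕ) (hm : 8 ≤ m) (hme : Even m) : 2 * Nat.clog 2 m + 2 ≤ m := by
  set L := Nat.clog 2 m with hL
  by_cases hL3 : L ≤ 3
  · omega
  · have h1 : 2 ^ (L - 1) < m := Nat.pow_pred_clog_lt_self (by norm_num) (by omega)
    have h2 : ∀ k : ℕ, k + 4 ≤ 2 ^ (k + 2) := by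
      intro k
      induction k with
      | zero => norm_num
      | succ n ih => rw [pow_succ]; omega
    have h3 : 2 ^ (L - 1) = 2 * 2 ^ (L - 2) := by
      rw [← pow_succ']
      congr 1
      omega
    have h4 := h2 (L - 4)
    have h5 : L - 4 + 2 = L - 2 := by omega
    rw [h5] at h4
    obtain ⟨c, hc⟩ := hme
    omega

lemma classBound (m L : ℕ) (v : Fin m → Fin L → ZMod 2) (C : Finset (Fin m))
    (hrel : ∀ i ∈ C, ∀ i' ∈ C, ∀ j : Fin m,
      (∑ k : Fin L, (binRep L i.val k + binRep L i'.val k) * v j k)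
        = (if j = i then 1 else 0) + (if j = i' then 1 else 0)) :
    C.card ≤ L + 1 := by
  rcases C.eq_empty_or_nonempty with hC | ⟨a, ha⟩
  · simp [hC]
  · have hDkey : ∀ i ∈ C.erase a, ∀ j ∈ C.erase a,
        (∑ k : Fin L, (binRep L i.val k + binRep L a.val k) * v j k)
          = (if j = i then (1 : ZMod 2) else 0) := by
      intro i hi j hj
      rw [hrel i (Finset.mem_of_mem_erase hi) a ha j]
      have h0 : (if j = a then (1 : ZMod 2) else 0) = 0 := by
        simp [Finset.ne_of_mem_erase hj]
      rw [h0, add_zero]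
    have hli : LinearIndependent (ZMod 2)
        (fun (i : (C.erase a : Finset (Fin m))) (k : Fin L) =>
          binRep L (i : Fin m).val k + binRep L a.val k) := by
      rw [Fintype.linearIndependent_iff]
      intro gc hg i
      have hgk : ∀ k : Fin L,
          (∑ i' : (C.erase a : Finset (Fin m)),
            gc i' * (binRep L (i' : Fin m).val k + binRep L a.val k)) = 0 := by
        intro k
        have h := congrFun hg k
        simpa [Finset.sum_apply] using h
      have h0 : (∑ k : Fin L,
          (∑ i' : (C.erase a : Finset (Fin m)),
            gc i' * (binRep L (i' : Fin m).val k + binRep L a.val k)) * v (i : Fin m) k) = 0 := by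
        refine Finset.sum_eq_zero fun k _ => ?_
        rw [hgk k, zero_mul]
      have hswap : (∑ k : Fin L,
          (∑ i' : (C.erase a : Finset (Fin m)),
            gc i' * (binRep L (i' : Fin m).val k + binRep L a.val k)) * v (i : Fin m) k)
          = ∑ i' : (C.erase a : Finset (Fin m)),
              gc i' * (∑ k : Fin L,
                (binRep L (i' : Fin m).val k + binRep L a.val k) * v (i : Fin m) k) := by
        simp only [Finset.sum_mul]
        rw [Finset.sum_comm]
        simp only [Finset.mul_sum, mul_assoc]
      rw [hswap] at h0
      have hsingle : (∑ i' : (C.erase a : Finset (Fin m)),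
          gc i' * (∑ k : Fin L,
            (binRep L (i' : Fin m).val k + binRep L a.val k) * v (i : Fin m) k))
          = gc i := by
        have hterm : ∀ i' : (C.erase a : Finset (Fin m)),
            (∑ k : Fin L, (binRep L (i' : Fin m).val k + binRep L a.val k) * v (i : Fin m) k)
              = (if (i : Fin m) = (i' : Fin m) then (1 : ZMod 2) else 0) :=
          fun i' => hDkey _ i'.2 _ i.2
        rw [Finset.sum_congr rfl (fun i' _ => by rw [hterm i'])]
        rw [Finset.sum_eq_single i]
        · simp
        · intro b _ hbne
          have hne : (i : Fin m) ≠ (b : Fin m) := fun hcc => hbne (Subtype.ext hcc.symm)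
          simp [hne]
        · intro hni
          exact absurd (Finset.mem_univ i) hni
      rw [hsingle] at h0
      exact h0
    have hcard : (C.erase a).card ≤ L := by
      have h1 : Fintype.card (C.erase a : Finset (Fin m)) ≤
          Module.finrank (ZMod 2) (Fin L → ZMod 2) := hli.fintype_card_le_finrank
      rw [Fintype.card_coe] at h1
      simpa using h1
    have : 1 ≤ C.card := Finset.card_pos.mpr ⟨a, ha⟩
    have := Finset.card_erase_of_mem ha
    omega

lemma existsGoodMatching {n : ℕ} {β : Type*} [LinearOrder β] (h : ℕ)
    (hn : n = 2 * h) (hh : 1 ≤ h) (g : Fin n → β)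
    (hcard : ∀ s : Finset (Fin n), (∀ i ∈ s, ∀ i' ∈ s, g i = g i') → s.card ≤ h) :
    ∃ y : Fin n → Fin n, y ∘ y = id ∧ (∀ i, y i ≠ i) ∧ ∀ i, g (y i) ≠ g i := by
  subst hn
  set σ := Tuple.sort g with hσ
  have mono : Monotone (g ∘ σ) := Tuple.monotone_sort g
  have hlt1 : ∀ j : Fin (2 * h), j.val < h → j.val + h < 2 * h := by intro j hj; omega
  have hlt2 : ∀ j : Fin (2 * h), j.val - h < 2 * h := by
    intro j; have := j.isLt; omega
  set τ : Fin (2 * h) → Fin (2 * h) := fun j =>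
    if hj : j.val < h then ⟨j.val + h, hlt1 j hj⟩ else ⟨j.val - h, hlt2 j⟩ with hτ
  have hτval : ∀ j : Fin (2 * h), (τ j).val = if j.val < h then j.val + h else j.val - h := by
    intro j; by_cases hj : j.val < h <;> simp [hτ, hj]
  have hττ : ∀ j, τ (τ j) = j := by
    intro j
    have h3 := j.isLt
    apply Fin.ext
    rw [hτval (τ j), hτval j]
    split_ifs <;> omega
  have hτne : ∀ j, τ j ≠ j := by
    intro j heq
    have h1 := congrArg Fin.val heq
    rw [hτval j] at h1
    have := j.isLt
    split_ifs at h1 <;> omega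
  have key : ∀ j, g (σ (τ j)) ≠ g (σ j) := by
    intro j heq
    obtain ⟨p, q, hpq, hgeq⟩ : ∃ p q : Fin (2 * h), q.val = p.val + h ∧ g (σ p) = g (σ q) := by
      by_cases hj : j.val < h
      · exact ⟨j, τ j, by rw [hτval]; simp [hj], heq.symm⟩
      · refine ⟨τ j, j, ?_, heq⟩
        rw [hτval]
        have := j.isLt
        simp only [if_neg hj]
        omega
    have hallc : ∀ c ∈ Finset.Icc p q, g (σ c) = g (σ p) := by
      intro c hc
      rw [Finset.mem_Icc] at hc
      have h1 : g (σ p) ≤ g (σ c) := mono hc.1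
      have h2 : g (σ c) ≤ g (σ q) := mono hc.2
      rw [← hgeq] at h2
      exact le_antisymm h2 h1
    have hbig : ((Finset.Icc p q).image σ).card = h + 1 := by
      rw [Finset.card_image_of_injective _ σ.injective, Fin.card_Icc, hpq]
      omega
    have h1 := hcard ((Finset.Icc p q).image σ) (by
      intro x hx x' hx'
      simp only [Finset.mem_image] at hx hx'
      obtain ⟨c1, hc1, rfl⟩ := hx
      obtain ⟨c2, hc2, rfl⟩ := hx'
      rw [hallc c1 hc1, hallc c2 hc2])
    omega
  refine ⟨fun i => σ (τ (σ.symm i)), ?_, ?_, ?_⟩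
  · funext i
    show σ (τ (σ.symm (σ (τ (σ.symm i))))) = i
    rw [Equiv.symm_apply_apply, hττ, Equiv.apply_symm_apply]
  · intro i heq
    apply hτne (σ.symm i)
    have h1 : σ (τ (σ.symm i)) = σ (σ.symm i) := by rw [Equiv.apply_symm_apply]; exact heq
    exact σ.injective h1
  · intro i
    have h1 := key (σ.symm i)
    rwa [Equiv.apply_symm_apply] at h1



lemma core (m L : ℕ) (hm : 8 ≤ m) (hme : Even m) (hL2 : 2 * L + 2 ≤ m)
    (v : Fin m → Fin L → ZMod 2)
    (hma : ∀ y : Matching m, ∃ b : Fin m, ∀ j : Fin m,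
      (∑ k : Fin L, binRep L b.val k * v j k) + (if j = b then 1 else 0)
        = (∑ k : Fin L, binRep L (y.val b).val k * v j k) + (if j = (y.val b) then 1 else 0)) :
    False := by
  classical
  have hadd4 : ∀ A B C D : ZMod 2, A + B = C + D → A + C = B + D := by decide
  set W : Fin m → Fin m → ZMod 2 :=
    fun a j => (∑ k : Fin L, binRep L a.val k * v j k) + (if j = a then 1 else 0) with hW
  have hclass : ∀ i₀ : Fin m,
      (Finset.univ.filter (fun i' => W i' = W i₀)).card ≤ L + 1 := by
    intro i₀
    apply classBound m L v
    intro i hi i' hi' j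
    simp only [Finset.mem_filter] at hi hi'
    have hWW : W i = W i' := hi.2.trans hi'.2.symm
    have h1 := congrFun hWW j
    simp only [hW] at h1
    rw [sum_split]
    exact hadd4 _ _ _ _ h1
  obtain ⟨c, hc⟩ := hme
  have hm2 : m = 2 * c := by omega
  set eqv := Fintype.equivFin (Fin m → ZMod 2) with heqv
  set g : Fin m → Fin (Fintype.card (Fin m → ZMod 2)) := fun i => eqv (W i) with hg
  have hcard : ∀ s : Finset (Fin m), (∀ i ∈ s, ∀ i' ∈ s, g i = g i') → s.card ≤ c := by
    intro s hs
    rcases s.eq_empty_or_nonempty with rfl | ⟨i₀, hi₀⟩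
    · simp
    · have hsub : s ⊆ Finset.univ.filter (fun i' => W i' = W i₀) := by
        intro x hx
        simp only [Finset.mem_filter, Finset.mem_univ, true_and]
        have h1 := hs x hx i₀ hi₀
        simp only [hg] at h1
        exact eqv.injective h1
      have h1 := Finset.card_le_card hsub
      have h2 := hclass i₀
      omega
  obtain ⟨y, hinv, hfpf, hgood⟩ := existsGoodMatching c hm2 (by omega) g hcard
  set Y : Matching m := ⟨y, hinv, hfpf⟩ with hY
  obtain ⟨b, hb⟩ := hma Y
  have hYv : Y.val = y := rfl
  rw [hYv] at hb
  have hWeq : W b = W (y b) := by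
    funext j
    simp only [hW]
    exact hb j
  refine hgood b ?_
  simp only [hg]
  exact congrArg eqv hWeq.symm


/-- For even `m ≥ 8` (with `L = ⌈log₂ m⌉ = Nat.clog 2 m`) there is no classical
deterministic winning strategy for the matching game for `m`.
In `ZMod 2`, `+` is XOR and `*` is AND. -/
theorem matching_game_no_classical_winning_strategy (m : ℕ) (hm : 8 ≤ m) (hme : Even m) :
    ¬ ∃ (sA : (Fin m → ZMod 2) → (Fin (Nat.clog 2 m) → ZMod 2))
        (sB : Matching m → Fin m × Fin m × (Fin (Nat.clog 2 m) → ZMod 2)),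
        ∀ y : Matching m,
          y.val (sB y).1 = (sB y).2.1 ∧
          ∀ x : Fin m → ZMod 2,
            x (sB y).1 + x (sB y).2.1 =
              ∑ k : Fin (Nat.clog 2 m),
                (binRep (Nat.clog 2 m) ((sB y).1).val k +
                  binRep (Nat.clog 2 m) ((sB y).2.1).val k) *
                  (sA x k + (sB y).2.2 k) := by

  rintro ⟨sA, sB, hwin⟩
  classical
  have hL2 := clog_bound m hm hme
  have hsq : ∀ a b c : ZMod 2, a + b = (a + c) + (b + c) := by decide
  have hadd4 : ∀ A B C D : ZMod 2, A + B = C + D → A + C = B + D := by decide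
  set p : Fin m → Fin m → ZMod 2 := fun j i => if i = j then 1 else 0 with hp
  set vv : Fin m → Fin (Nat.clog 2 m) → ZMod 2 := fun j k => sA (p j) k + sA 0 k with hvv
  apply core m (Nat.clog 2 m) hm hme hL2 vv
  intro y
  obtain ⟨hb, hx⟩ := hwin y
  refine ⟨(sB y).1, ?_⟩
  rw [hb]
  intro j
  have h0 := hx 0
  have hj := hx (p j)
  have hcomb : (∑ k : Fin (Nat.clog 2 m),
      (binRep (Nat.clog 2 m) ((sB y).1).val k + binRep (Nat.clog 2 m) ((sB y).2.1).val k) * vv j k)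
      = (if j = (sB y).1 then 1 else 0) + (if j = (sB y).2.1 then 1 else 0) := by
    have e1 : ∀ k, vv j k = (sA (p j) k + (sB y).2.2 k) + (sA 0 k + (sB y).2.2 k) := by
      intro k
      simp only [hvv]
      exact hsq _ _ _
    calc (∑ k : Fin (Nat.clog 2 m),
          (binRep (Nat.clog 2 m) ((sB y).1).val k + binRep (Nat.clog 2 m) ((sB y).2.1).val k) * vv j k)
        = ∑ k : Fin (Nat.clog 2 m),
            ((binRep (Nat.clog 2 m) ((sB y).1).val k + binRep (Nat.clog 2 m) ((sB y).2.1).val k)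
                * (sA (p j) k + (sB y).2.2 k)
            + (binRep (Nat.clog 2 m) ((sB y).1).val k + binRep (Nat.clog 2 m) ((sB y).2.1).val k)
                * (sA 0 k + (sB y).2.2 k)) := by
          refine Finset.sum_congr rfl fun k _ => ?_
          rw [e1 k, mul_add]
      _ = (∑ k : Fin (Nat.clog 2 m),
            (binRep (Nat.clog 2 m) ((sB y).1).val k + binRep (Nat.clog 2 m) ((sB y).2.1).val k)
              * (sA (p j) k + (sB y).2.2 k))
          + (∑ k : Fin (Nat.clog 2 m),
            (binRep (Nat.clog 2 m) ((sB y).1).val k + binRep (Nat.clog 2 m) ((sB y).2.1).val k)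
              * (sA 0 k + (sB y).2.2 k)) :=
          Finset.sum_add_distrib
      _ = (p j (sB y).1 + p j (sB y).2.1)
          + ((0 : Fin m → ZMod 2) (sB y).1 + (0 : Fin m → ZMod 2) (sB y).2.1) := by
          rw [← hj, ← h0]
      _ = (if j = (sB y).1 then 1 else 0) + (if j = (sB y).2.1 then 1 else 0) := by
          simp only [hp, Pi.zero_apply, add_zero]
          congr 1 <;> simp [eq_comm]
  rw [sum_split] at hcomb
  exact hadd4 _ _ _ _ hcomb
end

section
/- Let m > 0 be an even integer and L = ⌈log₂ m⌉, and suppose (s_A, s_B) is a classical deterministic winning strategy for the matching game for m. Let G_s be the simple graph on vertex set {0,…,m−1} whose edges are exactly the pairs {b₁, b₂} that s_B outputs as its pair component on at least one perfect matching. Then there exists a set R of bit strings of length m such that simultaneously: (1) |R| ≥ 2^{m−L}; (2) G_s contains a connected component of cardinality greater than m/2; (3) for each edge {i, j} of G_s, the value r_i ⊕ r_j is the same for every r ∈ R. -/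
/-- Let `m > 0` be even, `L = ⌈log₂ m⌉`, and let `(sA, sB)` be a classical
deterministic winning strategy for the matching game for `m`.  Let `G` be the
graph on `{0, …, m-1}` whose edges are exactly the pairs output by `sB` on at
least one perfect matching.  Then there is a set `R` of bit strings of
length `m` with `|R| ≥ 2^(m-L)`, such that `G` has a connected component of
cardinality greater than `m/2`, and for each edge `{i, j}` of `G` the value
`r i ⊕ r j` is the same for every `r ∈ R`. -/
theorem matching_game_winning_strategy_gives_R (m : ℕ) (hm : 0 < m) (hme : Even m)
    (sA : (Fin m → ZMod 2) → (Fin (Nat.clog 2 m) → ZMod 2))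
    (sB : Matching m → Fin m × Fin m × (Fin (Nat.clog 2 m) → ZMod 2))
    (hwin : ∀ y : Matching m,
      y.val (sB y).1 = (sB y).2.1 ∧
      ∀ x : Fin m → ZMod 2,
        x (sB y).1 + x (sB y).2.1 =
          ∑ k : Fin (Nat.clog 2 m),
            (binRep (Nat.clog 2 m) ((sB y).1).val k +
              binRep (Nat.clog 2 m) ((sB y).2.1).val k) *
              (sA x k + (sB y).2.2 k))
    (G : SimpleGraph (Fin m))
    (hG : ∀ i j : Fin m, G.Adj i j ↔
      ∃ y : Matching m,
        ((sB y).1 = i ∧ (sB y).2.1 = j) ∨ ((sB y).1 = j ∧ (sB y).2.1 = i)) :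
    ∃ R : Finset (Fin m → ZMod 2),
      2 ^ (m - Nat.clog 2 m) ≤ R.card ∧
      (∃ c : G.ConnectedComponent, (m : ℕ) / 2 < c.supp.ncard) ∧
      (∀ i j : Fin m, G.Adj i j → ∀ r ∈ R, ∀ r' ∈ R, r i + r j = r' i + r' j) := by
  classical
  obtain ⟨h, hh⟩ := hme
  have hhpos : 0 < h := by omega
  have hhm : h < m := by omega
  have hm2 : m / 2 = h := by omega
  -- Part (1): pigeonhole on sA
  have hLm : Nat.clog 2 m ≤ m := (Nat.clog_le_iff_le_pow one_lt_two).mpr (Nat.lt_two_pow_self (n := m)).le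
  have hcard : Fintype.card (Fin (Nat.clog 2 m) → ZMod 2) * 2 ^ (m - Nat.clog 2 m) ≤
      Fintype.card (Fin m → ZMod 2) := by
    simp only [Fintype.card_fun, Fintype.card_fin, ZMod.card]
    rw [← pow_add, Nat.add_sub_cancel' hLm]
  obtain ⟨a, ha⟩ := Fintype.exists_le_card_fiber_of_mul_le_card (f := sA) hcard
  refine ⟨Finset.univ.filter (fun x => sA x = a), ha, ?_, ?_⟩
  · -- Part (2): big connected component
    by_contra hbig
    push_neg at hbig
    have hbig' : ∀ c : G.ConnectedComponent, c.supp.ncard ≤ h := by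
      intro c; have := hbig c; omega
    -- canonical representative of each component
    set S : Fin m → Finset (Fin m) :=
      fun v => Finset.univ.filter (fun w => G.connectedComponentMk w = G.connectedComponentMk v)
      with hSdef
    have hmemS : ∀ v w : Fin m,
        w ∈ S v ↔ G.connectedComponentMk w = G.connectedComponentMk v := by
      intro v w; simp [hSdef]
    have hSne : ∀ v, (S v).Nonempty := fun v => ⟨v, (hmemS v v).mpr rfl⟩
    set f : Fin m → Fin m := fun v => (S v).min' (hSne v) with hfdef
    have hfmem : ∀ v, f v ∈ S v := fun v => Finset.min'_mem _ _
    have hf : ∀ v w : Fin m,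
        f v = f w ↔ G.connectedComponentMk v = G.connectedComponentMk w := by
      intro v w
      constructor
      · intro hvw
        have h1 := (hmemS v (f v)).mp (hfmem v)
        have h2 := (hmemS w (f w)).mp (hfmem w)
        rw [hvw] at h1; rw [← h1, ← h2]
      · intro hc
        have : S v = S w := by
          ext u; rw [hmemS, hmemS, hc]
        simp only [hfdef, this]
    -- fibers of f have size ≤ h
    have hfiber : ∀ v : Fin m,
        (Finset.univ.filter (fun w => f w = f v)).card ≤ h := by
      intro v
      have he : Finset.univ.filter (fun w => f w = f v) = S v := by
        ext w
        simp only [Finset.mem_filter, Finset.mem_univ, true_and, hmemS]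
        exact hf w v
      rw [he]
      have hsupp : (G.connectedComponentMk v).supp.ncard = (S v).card := by
        rw [Set.ncard_eq_toFinset_card']
        congr 1
        ext w
        simp [hSdef, SimpleGraph.ConnectedComponent.mem_supp_iff]
      rw [← hsupp]
      exact hbig' _
    -- sort
    set σ : Equiv.Perm (Fin m) := Tuple.sort f with hσdef
    have hmono : Monotone (f ∘ σ) := Tuple.monotone_sort f
    -- rotation
    have hmod : ∀ jv : ℕ, jv < m →
        (jv + h) % m = jv + h ∨ (jv + h) % m + m = jv + h := by
      intro jv hj
      rcases lt_or_ge (jv + h) m with hlt | hge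
      · exact Or.inl (Nat.mod_eq_of_lt hlt)
      · right
        rw [Nat.mod_eq_sub_mod hge, Nat.mod_eq_of_lt (by omega)]
        omega
    set ρ : Fin m → Fin m := fun j => ⟨(j.val + h) % m, Nat.mod_lt _ hm⟩ with hρdef
    have hρval : ∀ j : Fin m, (ρ j).val = (j.val + h) % m := fun j => rfl
    have hρρ : ∀ j : Fin m, ρ (ρ j) = j := by
      intro j
      apply Fin.ext
      rw [hρval, hρval]
      have hb1 : (j.val + h) % m < m := Nat.mod_lt _ hm
      have hb2 : ((j.val + h) % m + h) % m < m := Nat.mod_lt _ hm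
      rcases hmod j.val j.isLt with h1 | h1 <;>
        rcases hmod ((j.val + h) % m) hb1 with h2 | h2 <;>
        omega
    have hρne : ∀ j : Fin m, ρ j ≠ j := by
      intro j hj
      have := congrArg Fin.val hj
      rw [hρval] at this
      have hb1 : (j.val + h) % m < m := Nat.mod_lt _ hm
      rcases hmod j.val j.isLt with h1 | h1 <;> omega
    set yfun : Fin m → Fin m := fun v => σ (ρ (σ.symm v)) with hyfdef
    have hyinv : yfun ∘ yfun = id := by
      funext v
      simp [hyfdef, hρρ]
    have hyne : ∀ v, yfun v ≠ v := by
      intro v hv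
      have : ρ (σ.symm v) = σ.symm v := by
        have := congrArg σ.symm hv
        simpa [hyfdef] using this
      exact hρne _ this
    set y : Matching m := ⟨yfun, hyinv, hyne⟩ with hydef
    have hadj : G.Adj (sB y).1 (sB y).2.1 := (hG _ _).mpr ⟨y, Or.inl ⟨rfl, rfl⟩⟩
    have hcomp : G.connectedComponentMk (sB y).1 = G.connectedComponentMk (sB y).2.1 :=
      SimpleGraph.ConnectedComponent.sound hadj.reachable
    have hyb : yfun (sB y).1 = (sB y).2.1 := (hwin y).1
    set j : Fin m := σ.symm (sB y).1 with hjdef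
    set j' : Fin m := ρ j with hj'def
    have hgj : f (σ j) = f (σ j') := by
      have h1 : σ j = (sB y).1 := by simp [hjdef]
      have h2 : σ j' = (sB y).2.1 := by
        rw [← hyb, hyfdef]
      rw [h1, h2]
      exact (hf _ _).mpr hcomp
    -- get ordered pair u ≤ v with v.val = u.val + h
    have hj'val : j'.val = j.val + h ∨ j.val = j'.val + h := by
      have hv := hρval j
      have hb1 : (j.val + h) % m < m := Nat.mod_lt _ hm
      rcases hmod j.val j.isLt with h1 | h1 <;> [left; right] <;> omega
    obtain ⟨u, v, huv, hgeq⟩ :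
        ∃ u v : Fin m, v.val = u.val + h ∧ f (σ u) = f (σ v) := by
      rcases hj'val with h1 | h1
      · exact ⟨j, j', h1, hgj⟩
      · exact ⟨j', j, h1, hgj.symm⟩
    have hule : u ≤ v := by rw [Fin.le_def]; omega
    -- the fiber of f ∘ σ over g u contains Icc u v
    have hsub : Finset.Icc u v ⊆ Finset.univ.filter (fun c => f (σ c) = f (σ u)) := by
      intro c hc
      rw [Finset.mem_Icc] at hc
      refine Finset.mem_filter.mpr ⟨Finset.mem_univ _, ?_⟩
      have h1 : f (σ u) ≤ f (σ c) := hmono hc.1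
      have h2 : f (σ c) ≤ f (σ v) := hmono hc.2
      rw [← hgeq] at h2
      exact le_antisymm h2 h1
    have hIcc : (Finset.Icc u v).card = h + 1 := by
      rw [Fin.card_Icc]
      omega
    have hle1 : h + 1 ≤ (Finset.univ.filter (fun c => f (σ c) = f (σ u))).card := by
      rw [← hIcc]; exact Finset.card_le_card hsub
    have hle2 : (Finset.univ.filter (fun c => f (σ c) = f (σ u))).card ≤ h := by
      have hbij : (Finset.univ.filter (fun c => f (σ c) = f (σ u))).card =
          (Finset.univ.filter (fun w => f w = f (σ u))).card := by
        apply Finset.card_bij (fun c _ => σ c)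
        · intro c hc
          rw [Finset.mem_filter] at hc ⊢
          exact ⟨Finset.mem_univ _, hc.2⟩
        · intro c1 _ c2 _ hc
          exact σ.injective hc
        · intro w hw
          refine ⟨σ.symm w, ?_, by simp⟩
          rw [Finset.mem_filter] at hw ⊢
          simpa using hw.2
      rw [hbij]
      exact hfiber (σ u)
    omega
  · -- Part (3): invariance on R
    intro i j hij r hr r' hr'
    rw [Finset.mem_filter] at hr hr'
    have hrr' : sA r = sA r' := hr.2.trans hr'.2.symm
    obtain ⟨y, hy⟩ := (hG i j).mp hij
    have e1 := (hwin y).2 r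
    have e2 := (hwin y).2 r'
    rcases hy with ⟨h1, h2⟩ | ⟨h1, h2⟩
    · rw [h1, h2, hrr'] at e1
      rw [h1, h2] at e2
      rw [e1, e2]
    · rw [h1, h2, hrr'] at e1
      rw [h1, h2] at e2
      rw [add_comm (r i), add_comm (r' i), e1, e2]
end

section
/- Let m > 0 be an even integer and let G be a simple graph on the vertex set {0,…,m−1} in which every connected component has cardinality at most m/2. Then there exists a perfect matching on {0,…,m−1}, i.e. a fixed-point-free involution y : Fin m → Fin m, such that for every vertex i, the vertices i and y i lie in different connected components of G. -/
/-- Let `m > 0` be even and let `G` be a simple graph on `{0, …, m-1}` in which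
every connected component has cardinality at most `m/2`.  Then there is a
perfect matching on `{0, …, m-1}` (a fixed-point-free involution
`y : Fin m → Fin m`) such that for every vertex `i`, the vertices `i` and `y i`
lie in different connected components of `G`. -/
theorem matching_avoiding_small_components (m : ℕ) (hm : 0 < m) (hme : Even m)
    (G : SimpleGraph (Fin m))
    (hsmall : ∀ c : G.ConnectedComponent, c.supp.ncard ≤ m / 2) :
    ∃ y : Fin m → Fin m,
      y ∘ y = id ∧ (∀ i, y i ≠ i) ∧ ∀ i, ¬ G.Reachable i (y i) := by
  classical
  haveI : NeZero m := ⟨hm.ne'⟩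
  obtain ⟨n, hmn⟩ := hme
  have hmn2 : m = 2 * n := by omega
  have hn : 0 < n := by omega
  have hnm : n < m := by omega
  have hdiv : m / 2 = n := by omega
  -- injective labelling of components by naturals
  obtain ⟨f, hf⟩ := exists_injective_nat G.ConnectedComponent
  set key : Fin m → ℕ := fun i => f (G.connectedComponentMk i) with hkey
  set σ : Equiv.Perm (Fin m) := Tuple.sort key with hσ
  have hmono : Monotone (key ∘ σ) := Tuple.monotone_sort key
  set nn : Fin m := ⟨n, hnm⟩ with hnn
  set y : Fin m → Fin m := fun i => σ (σ.symm i + nn) with hy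
  have hshift2 : ∀ k : Fin m, k + nn + nn = k := by
    intro k
    have hnnval : (nn : ℕ) = n := rfl
    have : nn + nn = 0 := by
      apply Fin.ext
      simp only [Fin.val_add, Fin.val_zero, hnn, Fin.val_mk]
      show ((n + n) % m : ℕ) = 0
      rw [← hmn, Nat.mod_self]
    rw [add_assoc, this, add_zero]
  -- key claim: components of σ k and σ (k + nn) differ
  have hkeyne : ∀ k : Fin m, key (σ k) ≠ key (σ (k + nn)) := by
    intro k hkeq
    -- set a ≤ b with b = a + n in ℕ
    set k' := k + nn with hk'
    have hk'val : (k' : ℕ) = ((k : ℕ) + n) % m := by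
      simp [hk', hnn, Fin.add_def]
    have hcases : ((k' : ℕ) = (k : ℕ) + n) ∨ ((k : ℕ) = (k' : ℕ) + n) := by
      rcases Nat.lt_or_ge ((k : ℕ) + n) m with h | h
      · left; rw [hk'val, Nat.mod_eq_of_lt h]
      · right
        have : (k' : ℕ) = (k : ℕ) + n - m := by
          rw [hk'val, Nat.mod_eq_sub_mod h, Nat.mod_eq_of_lt (by omega)]
        omega
    obtain ⟨a, b, hab, hka, hkb⟩ :
        ∃ a b : Fin m, (b : ℕ) = (a : ℕ) + n ∧ key (σ a) = key (σ b) ∧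
          ({k, k'} : Set (Fin m)) = {a, b} := by
      rcases hcases with h | h
      · exact ⟨k, k', h, hkeq, rfl⟩
      · exact ⟨k', k, h, hkeq.symm, Set.pair_comm _ _⟩
    -- all j in Icc a b map into the same component
    have hle : a ≤ b := by
      rw [Fin.le_def]; omega
    have hmid : ∀ j ∈ Set.Icc a b, key (σ j) = key (σ a) := by
      intro j hj
      exact le_antisymm (hka ▸ hmono hj.2) (hmono hj.1)
    set c := G.connectedComponentMk (σ a) with hc
    have hsub : σ '' Set.Icc a b ⊆ c.supp := by
      rintro x ⟨j, hj, rfl⟩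
      have := hmid j hj
      have : G.connectedComponentMk (σ j) = c := hf this
      simpa [SimpleGraph.ConnectedComponent.mem_supp_iff] using this
    have hcard : (Set.Icc a b).ncard = n + 1 := by
      rw [← Finset.coe_Icc, Set.ncard_coe_finset, Fin.card_Icc]
      omega
    have himgcard : (σ '' Set.Icc a b).ncard = n + 1 := by
      rw [Set.ncard_image_of_injective _ σ.injective, hcard]
    have := Set.ncard_le_ncard hsub (Set.toFinite _)
    have := hsmall c
    omega
  refine ⟨y, ?_, ?_, ?_⟩
  · funext i
    simp only [hy, Function.comp_apply, Equiv.symm_apply_apply, id_eq]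
    rw [hshift2, Equiv.apply_symm_apply]
  · intro i h
    have : σ.symm i + nn = σ.symm i := by
      have := congrArg σ.symm h
      simpa [hy] using this
    have hnz : nn ≠ 0 := by
      simp [hnn, Fin.ext_iff]
      omega
    exact hnz (by simpa using congrArg (· - σ.symm i) this)
  · intro i hr
    have : G.connectedComponentMk i = G.connectedComponentMk (y i) :=
      SimpleGraph.ConnectedComponent.sound hr
    apply hkeyne (σ.symm i)
    simp only [hkey]
    rw [Equiv.apply_symm_apply]
    exact congrArg f this
end

section
/- Let m > 0 be an even integer and L = ⌈log₂ m⌉. If there exists a classical deterministic winning strategy for the matching game for m, then there exist a simple graph G = (V, E) on m vertices and a function h : E → {0,1} such that the number of distinct colourings of G according to h is at least 2^{m−L} and G contains a connected component of cardinality greater than m/2. -/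
/-- Swap the two halves of `Fin m`, where `m = k + k`. -/
def swapHalf (k m : ℕ) (hm : m = k + k) (i : Fin m) : Fin m :=
  ⟨if i.val < k then i.val + k else i.val - k, by
    have := i.isLt; split_ifs <;> omega⟩

theorem swapHalf_val (k m : ℕ) (hm : m = k + k) (i : Fin m) :
    (swapHalf k m hm i).val = if i.val < k then i.val + k else i.val - k := rfl

theorem swapHalf_invol (k m : ℕ) (hm : m = k + k) (i : Fin m) :
    swapHalf k m hm (swapHalf k m hm i) = i := by
  have := i.isLt
  apply Fin.ext
  rw [swapHalf_val, swapHalf_val]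
  split_ifs <;> omega

theorem swapHalf_ne (k m : ℕ) (hk : 0 < k) (hm : m = k + k) (i : Fin m) :
    swapHalf k m hm i ≠ i := by
  intro hbad
  have hv := congrArg Fin.val hbad
  rw [swapHalf_val] at hv
  have := i.isLt
  split_ifs at hv <;> omega

/-- Let `m > 0` be even and `L = ⌈log₂ m⌉ = Nat.clog 2 m`.  If there exists a
classical deterministic winning strategy for the matching game for `m`, then
there exist a simple graph `G` on `m` vertices and a function `h : E → {0,1}`
such that the number of distinct colourings of `G` according to `h` (functions
`c : Fin m → ZMod 2` with `c u + c v = h {u, v}` for every edge; in `ZMod 2`,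
`+` is XOR and `*` is AND) is at least `2^(m-L)` and `G` contains a connected
component of cardinality greater than `m/2`. -/
theorem winning_strategy_gives_graph_and_colourings (m : ℕ) (hm : 0 < m)
    (hme : Even m)
    (hstrat : ∃ (sA : (Fin m → ZMod 2) → (Fin (Nat.clog 2 m) → ZMod 2))
        (sB : Matching m → Fin m × Fin m × (Fin (Nat.clog 2 m) → ZMod 2)),
        ∀ y : Matching m,
          y.val (sB y).1 = (sB y).2.1 ∧
          ∀ x : Fin m → ZMod 2,
            x (sB y).1 + x (sB y).2.1 =
              ∑ k : Fin (Nat.clog 2 m),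
                (binRep (Nat.clog 2 m) ((sB y).1).val k +
                  binRep (Nat.clog 2 m) ((sB y).2.1).val k) *
                  (sA x k + (sB y).2.2 k)) :
    ∃ (G : SimpleGraph (Fin m)) (h : G.edgeSet → ZMod 2),
      2 ^ (m - Nat.clog 2 m) ≤
        {c : Fin m → ZMod 2 |
          ∀ e : G.edgeSet, ∀ u v : Fin m, e.val = s(u, v) → c u + c v = h e}.ncard ∧
      ∃ comp : G.ConnectedComponent, m / 2 < comp.supp.ncard := by
  classical
  obtain ⟨sA, sB, hwin⟩ := hstrat
  obtain ⟨k, hk⟩ := hme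
  have hkpos : 0 < k := by omega
  have hk2 : m / 2 = k := by omega
  -- the graph whose edges are the pairs chosen by sB
  let G : SimpleGraph (Fin m) :=
    { Adj := fun u v => u ≠ v ∧ ∃ y : Matching m,
        ((sB y).1 = u ∧ (sB y).2.1 = v) ∨ ((sB y).1 = v ∧ (sB y).2.1 = u)
      symm := by
        constructor
        rintro u v ⟨hne, y, hc⟩
        exact ⟨hne.symm, y, hc.symm⟩
      loopless := ⟨fun v hv => hv.1 rfl⟩ }
  -- pigeonhole: a large fiber of sA
  have hLm : Nat.clog 2 m ≤ m :=
    (Nat.clog_le_iff_le_pow (by norm_num)).mpr Nat.lt_two_pow_self.le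
  have hcard : Fintype.card (Fin (Nat.clog 2 m) → ZMod 2) * 2 ^ (m - Nat.clog 2 m) ≤
      Fintype.card (Fin m → ZMod 2) := by
    rw [Fintype.card_fun, Fintype.card_fun, ZMod.card, Fintype.card_fin,
      Fintype.card_fin, ← pow_add]
    have : Nat.clog 2 m + (m - Nat.clog 2 m) = m := by omega
    rw [this]
  obtain ⟨a, ha⟩ := Fintype.exists_le_card_fiber_of_mul_le_card sA hcard
  have hpos : 0 < (Finset.univ.filter fun x => sA x = a).card :=
    lt_of_lt_of_le (Nat.pow_pos (by norm_num)) ha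
  obtain ⟨c0, hc0⟩ := Finset.card_pos.mp hpos
  have hc0a : sA c0 = a := (Finset.mem_filter.mp hc0).2
  let h : G.edgeSet → ZMod 2 := fun e =>
    Sym2.lift ⟨fun u v => c0 u + c0 v, fun u v => add_comm _ _⟩ e.val
  -- any x in the fiber of a agrees with c0 across every edge
  have key : ∀ x, sA x = a → ∀ u v : Fin m, G.Adj u v → x u + x v = c0 u + c0 v := by
    intro x hx u v hadj
    obtain ⟨hne, y, hc⟩ := hadj
    have h1 := (hwin y).2 x
    have h2 := (hwin y).2 c0
    rw [hx] at h1
    rw [hc0a] at h2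
    rcases hc with ⟨e1, e2⟩ | ⟨e1, e2⟩ <;> rw [e1, e2] at h1 h2 <;>
      linear_combination h1 - h2
  have hsub : {x : Fin m → ZMod 2 | sA x = a} ⊆
      {c : Fin m → ZMod 2 |
        ∀ e : G.edgeSet, ∀ u v : Fin m, e.val = s(u, v) → c u + c v = h e} := by
    intro x hx e u v hev
    have hadj : G.Adj u v := by
      have he := e.2
      rw [hev] at he
      exact he
    have hhe : h e = c0 u + c0 v := by
      show Sym2.lift _ e.val = _
      rw [hev, Sym2.lift_mk]
    rw [hhe]
    exact key x hx u v hadj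
  have hF : {x : Fin m → ZMod 2 | sA x = a}.ncard =
      (Finset.univ.filter fun x => sA x = a).card := by
    rw [← Set.ncard_coe_finset]
    congr 1
    ext x
    simp
  have hge : 2 ^ (m - Nat.clog 2 m) ≤
      {c : Fin m → ZMod 2 |
        ∀ e : G.edgeSet, ∀ u v : Fin m, e.val = s(u, v) → c u + c v = h e}.ncard := by
    refine le_trans ?_ (Set.ncard_le_ncard hsub (Set.toFinite _))
    rw [hF]
    exact ha
  refine ⟨G, h, hge, ?_⟩
  by_contra hcomp
  push_neg at hcomp
  -- order the vertices by connected component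
  obtain ⟨f, fspec⟩ : ∃ f : Fin m → Fin m, ∀ v w : Fin m, f v = f w ↔
      G.connectedComponentMk v = G.connectedComponentMk w := by
    refine ⟨fun i => (G.connectedComponentMk i).out, fun v w => ?_⟩
    constructor
    · intro hfw
      have := congrArg (Quot.mk G.Reachable) hfw
      beta_reduce at this
      exact (Quot.out_eq _).symm.trans (this.trans (Quot.out_eq _))
    · intro hvw
      simp only [hvw]
  obtain ⟨σ, hmono⟩ : ∃ σ : Equiv.Perm (Fin m), Monotone (f ∘ σ) :=
    ⟨Tuple.sort f, Tuple.monotone_sort f⟩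
  -- the "swap halves" matching
  let y : Matching m := ⟨fun i => σ (swapHalf k m hk (σ.symm i)), by
      constructor
      · funext i
        simp [Equiv.symm_apply_apply, swapHalf_invol]
      · intro i hbad
        have : swapHalf k m hk (σ.symm i) = σ.symm i := by
          have := congrArg σ.symm hbad
          simpa using this
        exact swapHalf_ne k m hkpos hk _ this⟩
  obtain ⟨hy1, -⟩ := hwin y
  have hadj : G.Adj (sB y).1 (y.val (sB y).1) :=
    ⟨Ne.symm (y.2.2 (sB y).1), y, Or.inl ⟨rfl, hy1.symm⟩⟩
  have hmk : G.connectedComponentMk (sB y).1 =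
      G.connectedComponentMk (y.val (sB y).1) :=
    SimpleGraph.ConnectedComponent.connectedComponentMk_eq_of_adj hadj
  have hfeq0 : f (σ (σ.symm (sB y).1)) = f (σ (swapHalf k m hk (σ.symm (sB y).1))) := by
    rw [Equiv.apply_symm_apply]
    exact (fspec _ _).mpr hmk
  -- find p, q at distance exactly k with equal f ∘ σ values
  have hpq : ∃ p q : Fin m, q.val = p.val + k ∧ f (σ p) = f (σ q) := by
    by_cases hc : (σ.symm (sB y).1).val < k
    · refine ⟨σ.symm (sB y).1, swapHalf k m hk (σ.symm (sB y).1), ?_, hfeq0⟩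
      rw [swapHalf_val, if_pos hc]
    · refine ⟨swapHalf k m hk (σ.symm (sB y).1), σ.symm (sB y).1, ?_, hfeq0.symm⟩
      have := (σ.symm (sB y).1).isLt
      rw [swapHalf_val, if_neg hc]
      clear hge
      omega
  obtain ⟨p, q, hq, hg⟩ := hpq
  have hconst : ∀ r : Fin m, p ≤ r → r ≤ q → f (σ r) = f (σ p) := by
    intro r h1 h2
    have l1 : f (σ p) ≤ f (σ r) := hmono h1
    have l2 : f (σ r) ≤ f (σ q) := hmono h2
    exact le_antisymm (hg ▸ l2) l1
  have hsubF : ∀ r ∈ Finset.Icc p q, σ r ∈ Finset.univ.filter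
      (fun v => G.connectedComponentMk v = G.connectedComponentMk (σ p)) := by
    intro r hr
    rw [Finset.mem_Icc] at hr
    simp only [Finset.mem_filter, Finset.mem_univ, true_and]
    exact (fspec _ _).mp (hconst r hr.1 hr.2)
  have hcard1 : (Finset.Icc p q).card = k + 1 := by
    rw [Fin.card_Icc]
    clear hge
    omega
  have hcard2 : (Finset.Icc p q).card ≤ (Finset.univ.filter
      (fun v => G.connectedComponentMk v = G.connectedComponentMk (σ p))).card :=
    Finset.card_le_card_of_injOn σ hsubF (σ.injective.injOn)
  have hsupp : (Finset.univ.filter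
      (fun v => G.connectedComponentMk v = G.connectedComponentMk (σ p))).card =
      (G.connectedComponentMk (σ p)).supp.ncard := by
    rw [← Set.ncard_coe_finset]
    congr 1
    ext v
    simp [SimpleGraph.ConnectedComponent.supp]
  have hle := hcomp (G.connectedComponentMk (σ p))
  clear hge
  omega
end
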